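/- arXiv:2409.07777 — 4 statements merged into one kernel-verified Lean document; each statement's English description precedes it below -/
import Mathlib

section
/- Let 𝒵 be a finite set and Q₀, Q₁ probability mass functions on 𝒵 with Q₁ absolutely continuous with respect to Q₀ and Q₁ ≠ Q₀. Let n, L be positive integers, N = nL, and α ∈ (0,1). Then the relative entropy between the slotted mixture Q_α^N and the product distribution Q₀^⊗N satisfies D(Q_α^N ‖ Q₀^⊗N) ≤ exp(n α² χ₂(Q₁‖Q₀) − log L). -/
lemma sum_prod_pi {ι Z : Type*} [Fintype ι] [Fintype Z] [DecidableEq ι]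
    (g : ι → Z → ℝ) :
    ∑ z : ι → Z, ∏ i, g i (z i) = ∏ i, ∑ x, g i x := by
  rw [Finset.prod_univ_sum, Fintype.piFinset_univ]

lemma sum_prod_pi2 {Z : Type*} [Fintype Z] {n L : ℕ}
    (g : Fin L → Fin n → Z → ℝ) :
    ∑ z : Fin L → Fin n → Z, ∏ ℓ, ∏ i, g ℓ i (z ℓ i) = ∏ ℓ, ∏ i, ∑ x, g ℓ i x := by
  have h := sum_prod_pi (ι := Fin L) (Z := Fin n → Z) (fun ℓ w => ∏ i, g ℓ i (w i))
  rw [h]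
  exact Finset.prod_congr rfl fun ℓ _ => sum_prod_pi _

lemma stmt0_aux {Z : Type*} [Fintype Z] (Q0 Qa : Z → ℝ)
    (h0 : ∀ z, 0 ≤ Q0 z) (ha : ∀ z, 0 ≤ Qa z)
    (h0sum : ∑ z, Q0 z = 1) (hasum : ∑ z, Qa z = 1)
    (habs : ∀ z, Q0 z = 0 → Qa z = 0)
    (n L : ℕ) (hL : 0 < L) :
    ∑ z : Fin L → Fin n → Z,
        ((1 / (L : ℝ)) * ∑ t : Fin L, ∏ ℓ : Fin L, ∏ i : Fin n,
            (if ℓ = t then Qa (z ℓ i) else Q0 (z ℓ i))) *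
          Real.log
            (((1 / (L : ℝ)) * ∑ t : Fin L, ∏ ℓ : Fin L, ∏ i : Fin n,
                (if ℓ = t then Qa (z ℓ i) else Q0 (z ℓ i))) /
              (∏ ℓ : Fin L, ∏ i : Fin n, Q0 (z ℓ i)))
      ≤ ((∑ x, Qa x * Qa x / Q0 x) ^ n) / L := by
  classical
  have hLR : (0:ℝ) < L := Nat.cast_pos.mpr hL
  set c : ℝ := ∑ x, Qa x * Qa x / Q0 x with hcdef
  set f : Fin L → Fin L → Z → ℝ := fun t ℓ x => if ℓ = t then Qa x else Q0 x with hfdef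
  set A : Fin L → (Fin L → Fin n → Z) → ℝ := fun t z => ∏ ℓ, ∏ i, f t ℓ (z ℓ i) with hAdef
  set P : (Fin L → Fin n → Z) → ℝ := fun z => (1 / (L:ℝ)) * ∑ t, A t z with hPdef
  set Q : (Fin L → Fin n → Z) → ℝ := fun z => ∏ ℓ, ∏ i, Q0 (z ℓ i) with hQdef
  show ∑ z, P z * Real.log (P z / Q z) ≤ c ^ n / L
  have hf_nonneg : ∀ t ℓ x, 0 ≤ f t ℓ x := by
    intro t ℓ x; simp only [hfdef]; split
    · exact ha x
    · exact h0 x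
  have hA_nonneg : ∀ t z, 0 ≤ A t z := fun t z =>
    Finset.prod_nonneg fun ℓ _ => Finset.prod_nonneg fun i _ => hf_nonneg t ℓ (z ℓ i)
  have hP_nonneg : ∀ z, 0 ≤ P z := fun z =>
    mul_nonneg (by positivity) (Finset.sum_nonneg fun t _ => hA_nonneg t z)
  have hQ_nonneg : ∀ z, 0 ≤ Q z := fun z =>
    Finset.prod_nonneg fun ℓ _ => Finset.prod_nonneg fun i _ => h0 (z ℓ i)
  have hQ_zero : ∀ z, Q z = 0 → P z = 0 := by
    intro z hz
    obtain ⟨ℓ, -, hℓ⟩ := Finset.prod_eq_zero_iff.mp hz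
    obtain ⟨i, -, hi⟩ := Finset.prod_eq_zero_iff.mp hℓ
    have hAz : ∀ t, A t z = 0 := by
      intro t
      refine Finset.prod_eq_zero (Finset.mem_univ ℓ) ?_
      refine Finset.prod_eq_zero (Finset.mem_univ i) ?_
      simp only [hfdef]
      split
      · exact habs _ hi
      · exact hi
    simp [hPdef, hAz]
  -- termwise upper bound
  have step1 : ∀ z, P z * Real.log (P z / Q z) ≤ P z * P z / Q z - P z := by
    intro z
    rcases eq_or_lt_of_le (hP_nonneg z) with h | h
    · rw [← h]; simp
    · have hQpos : 0 < Q z := by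
        rcases (hQ_nonneg z).lt_or_eq with hq | hq
        · exact hq
        · exact absurd (hQ_zero z hq.symm) (ne_of_gt h)
      have hlog := Real.log_le_sub_one_of_pos (div_pos h hQpos)
      calc P z * Real.log (P z / Q z) ≤ P z * (P z / Q z - 1) :=
            mul_le_mul_of_nonneg_left hlog h.le
        _ = P z * P z / Q z - P z := by field_simp
  have hsum_f : ∀ t ℓ, ∑ x, f t ℓ x = 1 := by
    intro t ℓ
    by_cases h : ℓ = t <;> simp [hfdef, h, hasum, h0sum]
  have hsumA : ∀ t, ∑ z : Fin L → Fin n → Z, A t z = 1 := by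
    intro t
    rw [hAdef]
    rw [sum_prod_pi2 (fun ℓ _ x => f t ℓ x)]
    simp [hsum_f]
  have step2 : ∑ z : Fin L → Fin n → Z, P z = 1 := by
    simp only [hPdef]
    rw [← Finset.mul_sum, Finset.sum_comm]
    simp [hsumA, Finset.sum_const, hLR.ne']
  -- coordinate sums
  have hcoord : ∀ (t t' ℓ : Fin L), ∑ x, f t ℓ x * f t' ℓ x / Q0 x
      = if ℓ = t ∧ ℓ = t' then c else 1 := by
    intro t t' ℓ
    by_cases h1 : ℓ = t <;> by_cases h2 : ℓ = t'
    · rw [if_pos ⟨h1, h2⟩]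
      simp only [hfdef, if_pos h1, if_pos h2, hcdef]
    · rw [if_neg (by tauto)]
      simp only [hfdef, if_pos h1, if_neg h2]
      rw [← hasum]
      refine Finset.sum_congr rfl fun x _ => ?_
      rcases eq_or_ne (Q0 x) 0 with hx | hx
      · simp [hx, habs x hx]
      · rw [mul_div_assoc, div_self hx, mul_one]
    · rw [if_neg (by tauto)]
      simp only [hfdef, if_neg h1, if_pos h2]
      rw [← hasum]
      refine Finset.sum_congr rfl fun x _ => ?_
      rcases eq_or_ne (Q0 x) 0 with hx | hx
      · simp [hx, habs x hx]
      · rw [mul_comm, mul_div_assoc, div_self hx, mul_one]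
    · rw [if_neg (by tauto)]
      simp only [hfdef, if_neg h1, if_neg h2]
      rw [← h0sum]
      refine Finset.sum_congr rfl fun x _ => ?_
      rcases eq_or_ne (Q0 x) 0 with hx | hx
      · simp [hx]
      · rw [mul_div_assoc, div_self hx, mul_one]
  have key : ∀ t t', ∑ z : Fin L → Fin n → Z, A t z * A t' z / Q z
      = if t = t' then c ^ n else 1 := by
    intro t t'
    have hz : ∀ z : Fin L → Fin n → Z, A t z * A t' z / Q z
        = ∏ ℓ, ∏ i, (f t ℓ (z ℓ i) * f t' ℓ (z ℓ i) / Q0 (z ℓ i)) := by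
      intro z
      simp only [hAdef, hQdef, ← Finset.prod_mul_distrib, ← Finset.prod_div_distrib]
    simp only [hz]
    rw [sum_prod_pi2 (fun ℓ _ x => f t ℓ x * f t' ℓ x / Q0 x)]
    simp only [hcoord, Finset.prod_const, Finset.card_univ, Fintype.card_fin]
    rcases eq_or_ne t t' with h | h
    · subst h
      rw [if_pos rfl]
      rw [Finset.prod_eq_single t]
      · simp
      · intro ℓ _ hℓ; simp [hℓ]
      · simp
    · rw [if_neg h]
      refine Finset.prod_eq_one fun ℓ _ => ?_
      have hne : ¬(ℓ = t ∧ ℓ = t') := by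
        rintro ⟨rfl, rfl⟩; exact h rfl
      simp [hne]
  have step3 : ∑ z : Fin L → Fin n → Z, P z * P z / Q z
      = 1 + (c ^ n - 1) / L := by
    have hPP : ∀ z, P z * P z / Q z
        = (1 / (L:ℝ)^2) * ∑ t, ∑ t', A t z * A t' z / Q z := by
      intro z
      have hSS : (∑ t, A t z) * (∑ t', A t' z) = ∑ t, ∑ t', A t z * A t' z :=
        Finset.sum_mul_sum _ _ _ _
      have h1 : P z * P z / Q z
          = 1/(L:ℝ)^2 * ((∑ t, A t z) * (∑ t', A t' z) / Q z) := by
        simp only [hPdef]; ring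
      rw [h1, hSS, Finset.sum_div]
      congr 1
      exact Finset.sum_congr rfl fun t _ => Finset.sum_div _ _ _
    simp only [hPP, ← Finset.mul_sum]
    have hsw : ∑ z : Fin L → Fin n → Z, ∑ t : Fin L, ∑ t' : Fin L, A t z * A t' z / Q z
        = ∑ t : Fin L, ∑ t' : Fin L, ∑ z : Fin L → Fin n → Z, A t z * A t' z / Q z := by
      rw [Finset.sum_comm]
      exact Finset.sum_congr rfl fun t _ => Finset.sum_comm
    have hinner : ∀ t : Fin L, ∑ t' : Fin L, (if t = t' then c ^ n else 1 : ℝ)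
        = (L:ℝ) + (c ^ n - 1) := by
      intro t
      have hre : ∀ t' : Fin L, (if t = t' then c ^ n else 1 : ℝ)
          = 1 + (if t = t' then c ^ n - 1 else 0) := by
        intro t'; split_ifs <;> ring
      rw [Finset.sum_congr rfl fun t' _ => hre t', Finset.sum_add_distrib,
        Finset.sum_const, Finset.sum_ite_eq, Finset.card_univ, Fintype.card_fin,
        nsmul_eq_mul, mul_one, if_pos (Finset.mem_univ t)]
    have hswap : ∑ t : Fin L, ∑ t' : Fin L, ∑ z : Fin L → Fin n → Z, A t z * A t' z / Q z
        = (L:ℝ) * ((L:ℝ) + (c ^ n - 1)) := by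
      simp only [key, hinner, Finset.sum_const, Finset.card_univ, Fintype.card_fin,
        nsmul_eq_mul]
    rw [hsw, hswap]
    field_simp
  calc ∑ z, P z * Real.log (P z / Q z)
      ≤ ∑ z : Fin L → Fin n → Z, (P z * P z / Q z - P z) :=
        Finset.sum_le_sum fun z _ => step1 z
    _ = (1 + (c ^ n - 1) / L) - 1 := by rw [Finset.sum_sub_distrib, step3, step2]
    _ ≤ c ^ n / L := by
        have h1 : 1 + (c ^ n - 1) / (L:ℝ) - 1 = (c ^ n - 1) / L := by ring
        rw [h1]
        exact (div_le_div_iff_of_pos_right hLR).mpr (by linarith)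


/-- For a finite alphabet `Z` with pmfs `Q0, Q1` (`Q1 ≪ Q0`, `Q1 ≠ Q0`),
`n, L` positive, `α ∈ (0,1)`, the relative entropy between the slotted mixture
`Q_α^N` (codeword slot chosen uniformly among `L` slots of length `n`) and the
product `Q0^⊗N` is at most `exp(n α² χ₂(Q1‖Q0) − log L)`. The `N = n·L`
coordinates are modeled as `Fin L → Fin n → Z` (slot × position). -/
theorem stmt0 {Z : Type*} [Fintype Z] (Q0 Q1 : Z → ℝ)
    (hQ0nonneg : ∀ z, 0 ≤ Q0 z) (hQ1nonneg : ∀ z, 0 ≤ Q1 z)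
    (hQ0sum : ∑ z, Q0 z = 1) (hQ1sum : ∑ z, Q1 z = 1)
    (hac : ∀ z, Q0 z = 0 → Q1 z = 0) (hne : Q1 ≠ Q0)
    (n L : ℕ) (hn : 0 < n) (hL : 0 < L)
    (α : ℝ) (hα : α ∈ Set.Ioo (0 : ℝ) 1) :
    ∑ z : Fin L → Fin n → Z,
        ((1 / (L : ℝ)) * ∑ t : Fin L, ∏ ℓ : Fin L, ∏ i : Fin n,
            (if ℓ = t then (1 - α) * Q0 (z ℓ i) + α * Q1 (z ℓ i) else Q0 (z ℓ i))) *
          Real.log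
            (((1 / (L : ℝ)) * ∑ t : Fin L, ∏ ℓ : Fin L, ∏ i : Fin n,
                (if ℓ = t then (1 - α) * Q0 (z ℓ i) + α * Q1 (z ℓ i) else Q0 (z ℓ i))) /
              (∏ ℓ : Fin L, ∏ i : Fin n, Q0 (z ℓ i)))
      ≤ Real.exp ((n : ℝ) * α ^ 2 * (∑ z, (Q1 z - Q0 z) ^ 2 / Q0 z) - Real.log L) := by
  obtain ⟨hα0, hα1⟩ := hα
  have hLR : (0:ℝ) < L := Nat.cast_pos.mpr hL
  have hQanonneg : ∀ z, 0 ≤ (1 - α) * Q0 z + α * Q1 z := fun z =>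
    add_nonneg (mul_nonneg (by linarith) (hQ0nonneg z)) (mul_nonneg hα0.le (hQ1nonneg z))
  have hQasum : ∑ z, ((1 - α) * Q0 z + α * Q1 z) = 1 := by
    simp only [Finset.sum_add_distrib, ← Finset.mul_sum, hQ0sum, hQ1sum]; ring
  have hQa0 : ∀ z, Q0 z = 0 → (1 - α) * Q0 z + α * Q1 z = 0 := by
    intro z h; simp [h, hac z h]
  have hkey := stmt0_aux Q0 (fun z => (1 - α) * Q0 z + α * Q1 z)
    hQ0nonneg hQanonneg hQ0sum hQasum hQa0 n L hL
  refine le_trans hkey ?_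
  set χ := ∑ z, (Q1 z - Q0 z)^2 / Q0 z with hχ
  have hχ0 : 0 ≤ χ := Finset.sum_nonneg fun z _ => div_nonneg (sq_nonneg _) (hQ0nonneg z)
  have hce : (∑ x, ((1 - α) * Q0 x + α * Q1 x) * ((1 - α) * Q0 x + α * Q1 x) / Q0 x)
      = 1 + α^2 * χ := by
    have hx : ∀ x, ((1 - α) * Q0 x + α * Q1 x) * ((1 - α) * Q0 x + α * Q1 x) / Q0 x
        = Q0 x + (2*α) * (Q1 x - Q0 x) + α^2 * ((Q1 x - Q0 x)^2 / Q0 x) := by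
      intro x
      rcases eq_or_ne (Q0 x) 0 with h | h
      · simp [h, hac x h]
      · field_simp
        ring
    simp only [hx]
    rw [Finset.sum_add_distrib, Finset.sum_add_distrib, hQ0sum, ← Finset.mul_sum,
      ← Finset.mul_sum]
    have hz : ∑ x, (Q1 x - Q0 x) = 0 := by
      rw [Finset.sum_sub_distrib, hQ0sum, hQ1sum]; ring
    rw [hz, hχ]; ring
  rw [hce, Real.exp_sub, Real.exp_log hLR]
  refine (div_le_div_iff_of_pos_right hLR).mpr ?_
  calc (1 + α^2*χ)^n ≤ Real.exp (α^2*χ) ^ n :=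
        pow_le_pow_left₀ (by positivity) (by linarith [Real.add_one_le_exp (α^2*χ)]) n
    _ = Real.exp ((n:ℝ) * α^2 * χ) := by rw [← Real.exp_nat_mul]; ring_nf
end

section
/- Let 𝒵 be a finite set and Q₀, Q₁ probability mass functions on 𝒵 with Q₁ absolutely continuous with respect to Q₀. Let n, L be positive integers, N = nL, and α ∈ (0,1). Then D(Q_α^N ‖ Q₀^⊗N) ≤ ((1 + α² χ₂(Q₁‖Q₀))^n − 1)/L. -/
open Finset

lemma sum_pi_prod {ι Z : Type*} [Fintype ι] [DecidableEq ι] [Fintype Z] (f : ι → Z → ℝ) :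
    ∑ z : ι → Z, ∏ i, f i (z i) = ∏ i, ∑ w, f i w :=
  (Fintype.prod_sum f).symm

lemma sum_pi_prod2 {Z : Type*} [Fintype Z] (L n : ℕ) (g : Fin L → Fin n → Z → ℝ) :
    ∑ z : Fin L → Fin n → Z, ∏ ℓ, ∏ i, g ℓ i (z ℓ i) = ∏ ℓ, ∏ i, ∑ w, g ℓ i w := by
  refine (sum_pi_prod (fun ℓ (y : Fin n → Z) => ∏ i, g ℓ i (y i))).trans ?_
  exact Finset.prod_congr rfl fun ℓ _ => sum_pi_prod _

lemma prod_mul_div2 (L n : ℕ) (a b c : Fin L → Fin n → ℝ) :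
    (∏ ℓ, ∏ i, a ℓ i) * (∏ ℓ, ∏ i, b ℓ i) / (∏ ℓ, ∏ i, c ℓ i)
      = ∏ ℓ, ∏ i, (a ℓ i * b ℓ i / c ℓ i) := by
  rw [← Finset.prod_mul_distrib, ← Finset.prod_div_distrib]
  exact Finset.prod_congr rfl fun ℓ _ => by
    rw [← Finset.prod_mul_distrib, ← Finset.prod_div_distrib]



/-- Same setup as Statement 0 (absolute continuity `Q1 ≪ Q0`), with bound
`D(Q_α^N ‖ Q0^⊗N) ≤ ((1 + α² χ₂(Q1‖Q0))^n − 1)/L`. -/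
theorem stmt1 {Z : Type*} [Fintype Z] (Q0 Q1 : Z → ℝ)
    (hQ0nonneg : ∀ z, 0 ≤ Q0 z) (hQ1nonneg : ∀ z, 0 ≤ Q1 z)
    (hQ0sum : ∑ z, Q0 z = 1) (hQ1sum : ∑ z, Q1 z = 1)
    (hac : ∀ z, Q0 z = 0 → Q1 z = 0)
    (n L : ℕ) (hn : 0 < n) (hL : 0 < L)
    (α : ℝ) (hα : α ∈ Set.Ioo (0 : ℝ) 1) :
    ∑ z : Fin L → Fin n → Z,
        ((1 / (L : ℝ)) * ∑ t : Fin L, ∏ ℓ : Fin L, ∏ i : Fin n,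
            (if ℓ = t then (1 - α) * Q0 (z ℓ i) + α * Q1 (z ℓ i) else Q0 (z ℓ i))) *
          Real.log
            (((1 / (L : ℝ)) * ∑ t : Fin L, ∏ ℓ : Fin L, ∏ i : Fin n,
                (if ℓ = t then (1 - α) * Q0 (z ℓ i) + α * Q1 (z ℓ i) else Q0 (z ℓ i))) /
              (∏ ℓ : Fin L, ∏ i : Fin n, Q0 (z ℓ i)))
      ≤ ((1 + α ^ 2 * (∑ z, (Q1 z - Q0 z) ^ 2 / Q0 z)) ^ n - 1) / (L : ℝ) := by
  obtain ⟨hα0, hα1⟩ := hα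
  set Qa : Z → ℝ := fun w => (1 - α) * Q0 w + α * Q1 w with hQadef
  set A : Fin L → (Fin L → Fin n → Z) → ℝ :=
    fun t z => ∏ ℓ, ∏ i, (if ℓ = t then Qa (z ℓ i) else Q0 (z ℓ i)) with hAdef
  set P : (Fin L → Fin n → Z) → ℝ := fun z => (1 / (L : ℝ)) * ∑ t, A t z with hPdef
  set Qp : (Fin L → Fin n → Z) → ℝ := fun z => ∏ ℓ, ∏ i, Q0 (z ℓ i) with hQpdef
  set χ : ℝ := ∑ z, (Q1 z - Q0 z) ^ 2 / Q0 z with hχdef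
  show ∑ z, P z * Real.log (P z / Qp z) ≤ ((1 + α ^ 2 * χ) ^ n - 1) / (L : ℝ)
  have hLne : (L : ℝ) ≠ 0 := Nat.cast_ne_zero.mpr hL.ne'
  -- basic facts about Qa
  have hQanonneg : ∀ w, 0 ≤ Qa w := fun w => by
    have := hQ0nonneg w; have := hQ1nonneg w; dsimp [Qa]; nlinarith
  have hQa0 : ∀ w, Q0 w = 0 → Qa w = 0 := fun w h => by
    simp [Qa, h, hac w h]
  have hQasum : ∑ w, Qa w = 1 := by
    simp only [Qa]
    rw [Finset.sum_add_distrib, ← Finset.mul_sum, ← Finset.mul_sum, hQ0sum, hQ1sum]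
    ring
  -- per-element simplifications
  have hmix : ∀ w, Qa w * Q0 w / Q0 w = Qa w := fun w => by
    by_cases h : Q0 w = 0
    · simp [h, hQa0 w h]
    · field_simp
  have hmix' : ∀ w, Q0 w * Qa w / Q0 w = Qa w := fun w => by rw [mul_comm]; exact hmix w
  have hq0 : ∀ w, Q0 w * Q0 w / Q0 w = Q0 w := fun w => by
    by_cases h : Q0 w = 0
    · simp [h]
    · field_simp
  -- the chi-square value
  set S : ℝ := ∑ w, Qa w * Qa w / Q0 w with hSdef
  have hS : S = 1 + α ^ 2 * χ := by
    have hterm : ∀ w, Qa w * Qa w / Q0 w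
        = Q0 w + (2 * α) * (Q1 w - Q0 w) + α ^ 2 * ((Q1 w - Q0 w) ^ 2 / Q0 w) := by
      intro w
      by_cases h : Q0 w = 0
      · simp [h, hQa0 w h, hac w h]
      · field_simp [Qa]; ring
    rw [hSdef, Finset.sum_congr rfl fun w _ => hterm w]
    rw [Finset.sum_add_distrib, Finset.sum_add_distrib, ← Finset.mul_sum, ← Finset.mul_sum,
      Finset.sum_sub_distrib, hQ0sum, hQ1sum, hχdef]
    ring
  -- A vanishes where Qp does, and is nonnegative
  have hQpnonneg : ∀ z, 0 ≤ Qp z := fun z =>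
    Finset.prod_nonneg fun ℓ _ => Finset.prod_nonneg fun i _ => hQ0nonneg _
  have hA0 : ∀ t z, Qp z = 0 → A t z = 0 := by
    intro t z h
    rw [hQpdef] at h
    obtain ⟨ℓ, -, h⟩ := Finset.prod_eq_zero_iff.mp h
    obtain ⟨i, -, h⟩ := Finset.prod_eq_zero_iff.mp h
    refine Finset.prod_eq_zero (Finset.mem_univ ℓ) (Finset.prod_eq_zero (Finset.mem_univ i) ?_)
    split <;> simp [h, hQa0 _ h]
  have hAnonneg : ∀ t z, 0 ≤ A t z := fun t z =>
    Finset.prod_nonneg fun ℓ _ => Finset.prod_nonneg fun i _ => by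
      split
      · exact hQanonneg _
      · exact hQ0nonneg _
  have hPnonneg : ∀ z, 0 ≤ P z := fun z => by
    refine mul_nonneg (by positivity) (Finset.sum_nonneg fun t _ => hAnonneg t z)
  have hP0 : ∀ z, Qp z = 0 → P z = 0 := fun z h => by
    rw [hPdef]
    simp [Finset.sum_congr rfl fun t _ => hA0 t z h]
  -- total mass of P
  have hsumA : ∀ t, ∑ z, A t z = 1 := by
    intro t
    rw [hAdef]
    rw [sum_pi_prod2 L n (fun ℓ _ w => if ℓ = t then Qa w else Q0 w)]
    refine Finset.prod_eq_one fun ℓ _ => Finset.prod_eq_one fun i _ => ?_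
    by_cases h : ℓ = t <;> simp [h, hQasum, hQ0sum]
  have hsumP : ∑ z, P z = 1 := by
    simp only [hPdef]
    rw [← Finset.mul_sum, Finset.sum_comm]
    rw [Finset.sum_congr rfl fun t _ => hsumA t]
    simp [Finset.card_univ]
    field_simp
  -- the chi-square computation
  have hAA : ∀ t t' : Fin L, ∑ z, A t z * A t' z / Qp z = if t = t' then S ^ n else 1 := by
    intro t t'
    have hpt : ∀ z : Fin L → Fin n → Z, A t z * A t' z / Qp z
        = ∏ ℓ, ∏ i, ((if ℓ = t then Qa (z ℓ i) else Q0 (z ℓ i))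
            * (if ℓ = t' then Qa (z ℓ i) else Q0 (z ℓ i)) / Q0 (z ℓ i)) := by
      intro z
      exact prod_mul_div2 L n _ _ _
    rw [Finset.sum_congr rfl fun z _ => hpt z]
    rw [sum_pi_prod2 L n (fun ℓ _ w => (if ℓ = t then Qa w else Q0 w)
      * (if ℓ = t' then Qa w else Q0 w) / Q0 w)]
    have hval : ∀ ℓ : Fin L, ∑ w, ((if ℓ = t then Qa w else Q0 w)
        * (if ℓ = t' then Qa w else Q0 w) / Q0 w) = if ℓ = t ∧ ℓ = t' then S else 1 := by
      intro ℓ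
      by_cases h1 : ℓ = t
      · by_cases h2 : ℓ = t'
        · rw [if_pos ⟨h1, h2⟩,
            Finset.sum_congr rfl fun w _ => by rw [if_pos h1, if_pos h2]]
        · rw [if_neg (fun hh => h2 hh.2),
            Finset.sum_congr rfl fun w _ => by rw [if_pos h1, if_neg h2],
            Finset.sum_congr rfl fun w _ => hmix w, hQasum]
      · by_cases h2 : ℓ = t'
        · rw [if_neg (fun hh => h1 hh.1),
            Finset.sum_congr rfl fun w _ => by rw [if_neg h1, if_pos h2],
            Finset.sum_congr rfl fun w _ => hmix' w, hQasum]
        · rw [if_neg (fun hh => h1 hh.1),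
            Finset.sum_congr rfl fun w _ => by rw [if_neg h1, if_neg h2],
            Finset.sum_congr rfl fun w _ => hq0 w, hQ0sum]
    rw [Finset.prod_congr rfl fun ℓ _ => Finset.prod_congr rfl fun (i : Fin n) _ => hval ℓ]
    simp only [Finset.prod_const, Finset.card_univ, Fintype.card_fin]
    by_cases h : t = t'
    · subst h
      have h1 : ∀ ℓ : Fin L, (if ℓ = t ∧ ℓ = t then S else 1) ^ n
          = if ℓ = t then S ^ n else 1 := fun ℓ => by by_cases hh : ℓ = t <;> simp [hh]
      rw [Finset.prod_congr rfl fun ℓ _ => h1 ℓ,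
        Finset.prod_ite_eq' Finset.univ t (fun _ => S ^ n)]
      simp
    · rw [if_neg h]
      refine Finset.prod_eq_one fun ℓ _ => ?_
      have : ¬(ℓ = t ∧ ℓ = t') := by rintro ⟨rfl, rfl⟩; exact h rfl
      rw [if_neg this, one_pow]
  -- sum of P^2/Q
  have hT : ∑ z, P z * P z / Qp z = ((1 + α ^ 2 * χ) ^ n - 1) / (L : ℝ) + 1 := by
    have hpt : ∀ z, P z * P z / Qp z
        = (1 / (L : ℝ)) ^ 2 * ∑ t, ∑ t', A t z * A t' z / Qp z := by
      intro z
      rw [hPdef]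
      rw [show (1 / (L : ℝ) * ∑ t, A t z) * (1 / (L : ℝ) * ∑ t, A t z)
        = (1 / (L : ℝ)) ^ 2 * ((∑ t, A t z) * (∑ t', A t' z)) by ring]
      rw [Finset.sum_mul_sum, mul_div_assoc, Finset.sum_div]
      congr 1
      exact Finset.sum_congr rfl fun t _ => Finset.sum_div _ _ _
    rw [Finset.sum_congr rfl fun z _ => hpt z, ← Finset.mul_sum]
    rw [Finset.sum_comm]
    rw [Finset.sum_congr rfl fun t _ => Finset.sum_comm]
    rw [Finset.sum_congr rfl fun t _ => Finset.sum_congr rfl fun t' _ => hAA t t']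
    have hinner : ∀ t : Fin L, ∑ t' : Fin L, (if t = t' then S ^ n else 1)
        = (L : ℝ) + (S ^ n - 1) := by
      intro t
      have : ∀ t' : Fin L, (if t = t' then S ^ n else 1)
          = 1 + (if t = t' then S ^ n - 1 else 0) := by intro t'; split <;> ring
      rw [Finset.sum_congr rfl fun t' _ => this t', Finset.sum_add_distrib,
        Finset.sum_ite_eq Finset.univ t (fun _ => S ^ n - 1)]
      simp [Finset.card_univ]
    rw [Finset.sum_congr rfl fun t _ => hinner t]
    rw [Finset.sum_const, Finset.card_univ, Fintype.card_fin, hS]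
    field_simp
    ring
  -- pointwise log inequality
  have hkey : ∀ z, P z * Real.log (P z / Qp z) ≤ P z * P z / Qp z - P z := by
    intro z
    rcases eq_or_lt_of_le (hPnonneg z) with h | h
    · rw [← h]; simp
    · have hQne : Qp z ≠ 0 := fun hq => absurd (hP0 z hq) (ne_of_gt h)
      have hQpos : 0 < Qp z := lt_of_le_of_ne (hQpnonneg z) (Ne.symm hQne)
      have hlog : Real.log (P z / Qp z) ≤ P z / Qp z - 1 :=
        Real.log_le_sub_one_of_pos (div_pos h hQpos)
      calc P z * Real.log (P z / Qp z) ≤ P z * (P z / Qp z - 1) :=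
            mul_le_mul_of_nonneg_left hlog h.le
        _ = P z * P z / Qp z - P z := by ring
  calc ∑ z, P z * Real.log (P z / Qp z) ≤ ∑ z, (P z * P z / Qp z - P z) :=
        Finset.sum_le_sum fun z _ => hkey z
    _ = (∑ z, P z * P z / Qp z) - ∑ z, P z := Finset.sum_sub_distrib _ _
    _ = ((1 + α ^ 2 * χ) ^ n - 1) / (L : ℝ) := by rw [hT, hsumP]; ring
end

section
/- Let σ_w > 0, a > 0, ρ = a², and let n, L be positive integers with N = nL. Let Q₀ be the Gaussian distribution N(0, σ_w²) on ℝ and Q_ρ the two-point Gaussian mixture with density q_ρ(z) = ½ φ_{a,σ_w²}(z) + ½ φ_{−a,σ_w²}(z). Then the relative entropy between the slotted mixture Q_ρ^N on ℝ^N and the product Q₀^⊗N satisfies D(Q_ρ^N ‖ Q₀^⊗N) ≤ exp(n ρ²/(2σ_w⁴) − log L). -/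
/-- Gaussian density with mean `m` and variance `v`. -/
noncomputable def gaussDensity (m v z : ℝ) : ℝ :=
  (1 / Real.sqrt (2 * Real.pi * v)) * Real.exp (-(z - m) ^ 2 / (2 * v))

section Aux
open MeasureTheory Real

lemma gd_eq_pdf (m : ℝ) {v : ℝ} (hv : 0 < v) :
    gaussDensity m v = ProbabilityTheory.gaussianPDFReal m ⟨v, hv.le⟩ := by
  funext z
  simp [gaussDensity, ProbabilityTheory.gaussianPDFReal, one_div]
  rfl

lemma gd_pos (m : ℝ) {v : ℝ} (hv : 0 < v) (z : ℝ) : 0 < gaussDensity m v z := by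
  unfold gaussDensity
  have := Real.pi_pos
  positivity

lemma gd_integrable (m : ℝ) {v : ℝ} (hv : 0 < v) : Integrable (gaussDensity m v) := by
  rw [gd_eq_pdf m hv]
  exact ProbabilityTheory.integrable_gaussianPDFReal m _

lemma gd_integral (m : ℝ) {v : ℝ} (hv : 0 < v) : ∫ z, gaussDensity m v z = 1 := by
  rw [gd_eq_pdf m hv]
  exact ProbabilityTheory.integral_gaussianPDFReal_eq_one m
    (ne_of_gt (by exact_mod_cast hv : (0:NNReal) < ⟨v, hv.le⟩))

lemma gd_mul (m₁ m₂ : ℝ) {v : ℝ} (hv : 0 < v) (z : ℝ) :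
    gaussDensity m₁ v z * gaussDensity m₂ v z
      = Real.exp (m₁ * m₂ / v) * (gaussDensity 0 v z * gaussDensity (m₁ + m₂) v z) := by
  unfold gaussDensity
  have key : -(z - m₁)^2/(2*v) + (-(z - m₂)^2/(2*v))
      = m₁*m₂/v + (-(z-0)^2/(2*v) + (-(z-(m₁+m₂))^2/(2*v))) := by
    field_simp
    ring
  rw [mul_mul_mul_comm, ← Real.exp_add, key, Real.exp_add, Real.exp_add]
  ring

lemma q_sq_div_g {v : ℝ} (a : ℝ) (hv : 0 < v) (x : ℝ) :
    ((1/2) * gaussDensity a v x + (1/2) * gaussDensity (-a) v x)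
        * ((1/2) * gaussDensity a v x + (1/2) * gaussDensity (-a) v x) / gaussDensity 0 v x
      = Real.exp (a*a/v)/4 * gaussDensity (a+a) v x
          + Real.exp (a * -a/v)/2 * gaussDensity (a + -a) v x
          + Real.exp (-a * -a/v)/4 * gaussDensity (-a + -a) v x := by
  have hg := (gd_pos 0 hv x).ne'
  have h1 := gd_mul a a hv x
  have h2 := gd_mul a (-a) hv x
  have h3 := gd_mul (-a) (-a) hv x
  rw [div_eq_iff hg]
  linear_combination (1/4 : ℝ) * h1 + (1/2 : ℝ) * h2 + (1/4 : ℝ) * h3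

lemma q_sq_integrable {v : ℝ} (a : ℝ) (hv : 0 < v) :
    MeasureTheory.Integrable (fun x =>
      ((1/2) * gaussDensity a v x + (1/2) * gaussDensity (-a) v x)
        * ((1/2) * gaussDensity a v x + (1/2) * gaussDensity (-a) v x) / gaussDensity 0 v x) := by
  simp only [q_sq_div_g a hv]
  exact (((gd_integrable (a+a) hv).const_mul _).add
    ((gd_integrable (a + -a) hv).const_mul _)).add ((gd_integrable (-a + -a) hv).const_mul _)

lemma q_sq_integral {v : ℝ} (a : ℝ) (hv : 0 < v) :
    ∫ x, ((1/2) * gaussDensity a v x + (1/2) * gaussDensity (-a) v x)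
        * ((1/2) * gaussDensity a v x + (1/2) * gaussDensity (-a) v x) / gaussDensity 0 v x
      = Real.cosh (a^2/v) := by
  simp only [q_sq_div_g a hv]
  have hI1 : MeasureTheory.Integrable (fun x => Real.exp (a*a/v)/4 * gaussDensity (a+a) v x
      + Real.exp (a * -a/v)/2 * gaussDensity (a + -a) v x) :=
    ((gd_integrable (a+a) hv).const_mul _).add ((gd_integrable (a + -a) hv).const_mul _)
  have hI2 : MeasureTheory.Integrable
      (fun x => Real.exp (-a * -a/v)/4 * gaussDensity (-a + -a) v x) :=
    (gd_integrable (-a + -a) hv).const_mul _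
  rw [MeasureTheory.integral_add hI1 hI2,
    MeasureTheory.integral_add ((gd_integrable (a+a) hv).const_mul _)
      ((gd_integrable (a + -a) hv).const_mul _),
    integral_const_mul, integral_const_mul,
    integral_const_mul, gd_integral _ hv, gd_integral _ hv, gd_integral _ hv,
    Real.cosh_eq]
  rw [show a * -a / v = -(a^2/v) by ring, show -a * -a / v = a^2/v by ring,
    show a*a/v = a^2/v by ring]
  ring

lemma q_integrable {v : ℝ} (a : ℝ) (hv : 0 < v) :
    MeasureTheory.Integrable
      (fun x => (1/2) * gaussDensity a v x + (1/2) * gaussDensity (-a) v x) :=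
  ((gd_integrable a hv).const_mul _).add ((gd_integrable (-a) hv).const_mul _)

lemma q_integral {v : ℝ} (a : ℝ) (hv : 0 < v) :
    ∫ x, ((1/2) * gaussDensity a v x + (1/2) * gaussDensity (-a) v x) = 1 := by
  rw [MeasureTheory.integral_add ((gd_integrable a hv).const_mul _)
      ((gd_integrable (-a) hv).const_mul _),
    integral_const_mul, integral_const_mul,
    gd_integral _ hv, gd_integral _ hv]
  norm_num

lemma q_pos {v : ℝ} (a : ℝ) (hv : 0 < v) (x : ℝ) :
    0 < (1/2) * gaussDensity a v x + (1/2) * gaussDensity (-a) v x := by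
  have h1 := gd_pos a hv x
  have h2 := gd_pos (-a) hv x
  linarith

example (n : ℕ) : SigmaFinite (volume : Measure (Fin n → ℝ)) := inferInstance

lemma pi_prod_integrable {n L : ℕ} (f : Fin L → Fin n → ℝ → ℝ)
    (hf : ∀ ℓ i, Integrable (f ℓ i)) :
    Integrable (fun z : Fin L → Fin n → ℝ => ∏ ℓ, ∏ i, f ℓ i (z ℓ i)) :=
  Integrable.fintype_prod (f := fun ℓ (y : Fin n → ℝ) => ∏ i, f ℓ i (y i))
    (fun ℓ => Integrable.fintype_prod (f := fun i x => f ℓ i x) (fun i => hf ℓ i))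

lemma pi_prod_integral {n L : ℕ} (f : Fin L → Fin n → ℝ → ℝ) :
    ∫ z : Fin L → Fin n → ℝ, ∏ ℓ, ∏ i, f ℓ i (z ℓ i) = ∏ ℓ, ∏ i, ∫ x, f ℓ i x := by
  rw [integral_fintype_prod_volume_eq_prod (ι := Fin L)
    (f := fun ℓ (y : Fin n → ℝ) => ∏ i, f ℓ i (y i))]
  exact Finset.prod_congr rfl fun ℓ _ =>
    integral_fintype_prod_volume_eq_prod (ι := Fin n) (f := fun i x => f ℓ i x)

lemma kl_abstract {α : Type*} [MeasureSpace α] {L : ℕ} (hL : 0 < L) (c' : ℝ)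
    (F : Fin L → α → ℝ) (Q : α → ℝ)
    (hFpos : ∀ t z, 0 < F t z) (hQpos : ∀ z, 0 < Q z)
    (hFint : ∀ t, Integrable (F t)) (hF1 : ∀ t, (∫ z, F t z) = 1)
    (hFFint : ∀ t t', Integrable (fun z => F t z * F t' z / Q z))
    (hFF : ∀ t t', (∫ z, F t z * F t' z / Q z) = if t = t' then c' else 1) :
    (∫ z, ((1/(L:ℝ)) * ∑ t, F t z) * Real.log (((1/(L:ℝ)) * ∑ t, F t z) / Q z))
      ≤ c' / L := by
  have hLpos : (0:ℝ) < L := Nat.cast_pos.mpr hL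
  have t0 : Fin L := ⟨0, hL⟩
  have hc'0 : 0 ≤ c' := by
    have h := hFF t0 t0
    rw [if_pos rfl] at h
    rw [← h]
    exact integral_nonneg fun z =>
      div_nonneg (mul_nonneg (hFpos t0 z).le (hFpos t0 z).le) (hQpos z).le
  have hPpos : ∀ z, 0 < (1/(L:ℝ)) * ∑ t, F t z := fun z =>
    mul_pos (by positivity)
      (Finset.sum_pos (fun t _ => hFpos t z) ⟨t0, Finset.mem_univ _⟩)
  have hPint : Integrable (fun z => (1/(L:ℝ)) * ∑ t, F t z) :=
    (integrable_finset_sum _ (fun t _ => hFint t)).const_mul _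
  have hPI : (∫ z, (1/(L:ℝ)) * ∑ t, F t z) = 1 := by
    rw [integral_const_mul, integral_finset_sum _ (fun t _ => hFint t)]
    simp only [hF1, Finset.sum_const, Finset.card_univ, Fintype.card_fin, nsmul_eq_mul, mul_one]
    field_simp
  have hsq : ∀ z, ((1/(L:ℝ)) * ∑ t, F t z) * ((1/(L:ℝ)) * ∑ t, F t z) / Q z
      = (1/(L:ℝ)) * ((1/(L:ℝ)) * ∑ t, ∑ t', (F t z * F t' z / Q z)) := by
    intro z
    rw [show ((1/(L:ℝ)) * ∑ t, F t z) * ((1/(L:ℝ)) * ∑ t, F t z) / Q z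
        = (1/(L:ℝ)) * ((1/(L:ℝ)) * ((∑ t, F t z) * (∑ t', F t' z) / Q z)) from by ring,
      Finset.sum_mul_sum]
    simp only [Finset.sum_div]
  have hRint : Integrable (fun z =>
      ((1/(L:ℝ)) * ∑ t, F t z) * ((1/(L:ℝ)) * ∑ t, F t z) / Q z) := by
    simp only [hsq]
    exact ((integrable_finset_sum _ (fun t _ => integrable_finset_sum _
      (fun t' _ => hFFint t t'))).const_mul _).const_mul _
  have hRI : (∫ z, ((1/(L:ℝ)) * ∑ t, F t z) * ((1/(L:ℝ)) * ∑ t, F t z) / Q z)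
      = 1 + (c' - 1) / L := by
    simp only [hsq]
    rw [integral_const_mul, integral_const_mul,
      integral_finset_sum _ (fun t _ => integrable_finset_sum _ (fun t' _ => hFFint t t'))]
    have : ∀ t : Fin L, (∫ z, ∑ t', F t z * F t' z / Q z) = (c' - 1) + L := by
      intro t
      rw [integral_finset_sum _ (fun t' _ => hFFint t t')]
      simp only [hFF]
      have : ∀ t' : Fin L, (if t = t' then c' else 1)
          = (if t = t' then c' - 1 else 0) + 1 := by
        intro t'; split <;> ring
      simp only [this, Finset.sum_add_distrib, Finset.sum_ite_eq, Finset.mem_univ, if_pos,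
        Finset.sum_const, Finset.card_univ, Fintype.card_fin, nsmul_eq_mul, mul_one]
    simp only [this, Finset.sum_const, Finset.card_univ, Fintype.card_fin, nsmul_eq_mul]
    field_simp
    ring
  have hub : ∀ z, ((1/(L:ℝ)) * ∑ t, F t z) * Real.log (((1/(L:ℝ)) * ∑ t, F t z) / Q z)
      ≤ ((1/(L:ℝ)) * ∑ t, F t z) * ((1/(L:ℝ)) * ∑ t, F t z) / Q z
          - ((1/(L:ℝ)) * ∑ t, F t z) := by
    intro z
    have hP := hPpos z
    have hQ := hQpos z
    have h1 : Real.log (((1/(L:ℝ)) * ∑ t, F t z) / Q z)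
        ≤ ((1/(L:ℝ)) * ∑ t, F t z) / Q z - 1 :=
      Real.log_le_sub_one_of_pos (div_pos hP hQ)
    calc ((1/(L:ℝ)) * ∑ t, F t z) * Real.log (((1/(L:ℝ)) * ∑ t, F t z) / Q z)
        ≤ ((1/(L:ℝ)) * ∑ t, F t z) * (((1/(L:ℝ)) * ∑ t, F t z) / Q z - 1) :=
          mul_le_mul_of_nonneg_left h1 hP.le
      _ = ((1/(L:ℝ)) * ∑ t, F t z) * ((1/(L:ℝ)) * ∑ t, F t z) / Q z
            - ((1/(L:ℝ)) * ∑ t, F t z) := by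
          field_simp
  by_cases hf : Integrable (fun z =>
      ((1/(L:ℝ)) * ∑ t, F t z) * Real.log (((1/(L:ℝ)) * ∑ t, F t z) / Q z))
  · calc (∫ z, ((1/(L:ℝ)) * ∑ t, F t z) * Real.log (((1/(L:ℝ)) * ∑ t, F t z) / Q z))
        ≤ ∫ z, (((1/(L:ℝ)) * ∑ t, F t z) * ((1/(L:ℝ)) * ∑ t, F t z) / Q z
            - ((1/(L:ℝ)) * ∑ t, F t z)) :=
          integral_mono hf (hRint.sub hPint) hub
      _ = (1 + (c' - 1) / L) - 1 := by rw [integral_sub hRint hPint, hRI, hPI]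
      _ ≤ c' / L := by
          have h1L : 0 < 1 / (L:ℝ) := by positivity
          rw [sub_div]
          linarith
  · rw [integral_undef hf]
    positivity

end Aux

set_option maxHeartbeats 1000000 in
/-- For the AWGN eavesdropper channel with noise variance `σw²`, BPSK
amplitude `a > 0`, `ρ = a²`, the relative entropy between the slotted mixture density
`q_ρ^N` (uniform slot among `L` slots of length `n`) and the product `q0^⊗N` is at most
`exp(n ρ²/(2σw⁴) − log L)`. Coordinates of `ℝ^N`, `N = n·L`, are modeled as
`Fin L → Fin n → ℝ` (slot × position), with Lebesgue (volume) reference measure. -/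
theorem stmt2 (σw a ρ : ℝ) (hσ : 0 < σw) (ha : 0 < a) (hρ : ρ = a ^ 2)
    (n L : ℕ) (hn : 0 < n) (hL : 0 < L) :
    (∫ z : Fin L → Fin n → ℝ,
        ((1 / (L : ℝ)) * ∑ t : Fin L, ∏ ℓ : Fin L, ∏ i : Fin n,
            (if ℓ = t then
              (1 / 2) * gaussDensity a (σw ^ 2) (z ℓ i)
                + (1 / 2) * gaussDensity (-a) (σw ^ 2) (z ℓ i)
            else gaussDensity 0 (σw ^ 2) (z ℓ i))) *
          Real.log
            (((1 / (L : ℝ)) * ∑ t : Fin L, ∏ ℓ : Fin L, ∏ i : Fin n,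
                (if ℓ = t then
                  (1 / 2) * gaussDensity a (σw ^ 2) (z ℓ i)
                    + (1 / 2) * gaussDensity (-a) (σw ^ 2) (z ℓ i)
                else gaussDensity 0 (σw ^ 2) (z ℓ i))) /
              (∏ ℓ : Fin L, ∏ i : Fin n, gaussDensity 0 (σw ^ 2) (z ℓ i))))
      ≤ Real.exp ((n : ℝ) * ρ ^ 2 / (2 * σw ^ 4) - Real.log L) := by
  have hv : 0 < σw ^ 2 := by positivity
  set c : ℝ := Real.cosh (a ^ 2 / σw ^ 2) with hc
  set F : Fin L → (Fin L → Fin n → ℝ) → ℝ := fun t z => ∏ ℓ, ∏ i, (if ℓ = t then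
      (1/2) * gaussDensity a (σw^2) (z ℓ i) + (1/2) * gaussDensity (-a) (σw^2) (z ℓ i)
    else gaussDensity 0 (σw^2) (z ℓ i)) with hF
  set Q : (Fin L → Fin n → ℝ) → ℝ := fun z => ∏ ℓ, ∏ i, gaussDensity 0 (σw^2) (z ℓ i) with hQ
  have hsplit : ∀ (t t' : Fin L) (z : Fin L → Fin n → ℝ),
      F t z * F t' z / Q z
      = ∏ ℓ, ∏ i,
          ((if ℓ = t then (1/2) * gaussDensity a (σw^2) (z ℓ i)
              + (1/2) * gaussDensity (-a) (σw^2) (z ℓ i) else gaussDensity 0 (σw^2) (z ℓ i))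
            * (if ℓ = t' then (1/2) * gaussDensity a (σw^2) (z ℓ i)
              + (1/2) * gaussDensity (-a) (σw^2) (z ℓ i) else gaussDensity 0 (σw^2) (z ℓ i))
            / gaussDensity 0 (σw^2) (z ℓ i)) := by
    intro t t' z
    rw [hF, hQ]
    simp only [← Finset.prod_mul_distrib, ← Finset.prod_div_distrib]
  have hFpos : ∀ t z, 0 < F t z := fun t z =>
    Finset.prod_pos fun ℓ _ => Finset.prod_pos fun i _ => by
      by_cases h : ℓ = t
      · simp only [if_pos h]; exact q_pos a hv _
      · simp only [if_neg h]; exact gd_pos 0 hv _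
  have hQpos : ∀ z, 0 < Q z := fun z =>
    Finset.prod_pos fun ℓ _ => Finset.prod_pos fun i _ => gd_pos 0 hv _
  have hFint : ∀ t, MeasureTheory.Integrable (F t) := fun t =>
    pi_prod_integrable
      (fun ℓ i => fun x => if ℓ = t then
        (1/2) * gaussDensity a (σw^2) x + (1/2) * gaussDensity (-a) (σw^2) x
      else gaussDensity 0 (σw^2) x)
      (fun ℓ i => by
        by_cases h : ℓ = t
        · simp only [if_pos h]; exact q_integrable a hv
        · simp only [if_neg h]; exact gd_integrable 0 hv)
  have hF1 : ∀ t, (∫ z, F t z) = 1 := by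
    intro t
    rw [hF]
    rw [pi_prod_integral (fun ℓ i => fun x => if ℓ = t then
        (1/2) * gaussDensity a (σw^2) x + (1/2) * gaussDensity (-a) (σw^2) x
      else gaussDensity 0 (σw^2) x)]
    refine Finset.prod_eq_one fun ℓ _ => Finset.prod_eq_one fun i _ => ?_
    by_cases h : ℓ = t
    · simp only [if_pos h]; exact q_integral a hv
    · simp only [if_neg h]; exact gd_integral 0 hv
  have hFFint : ∀ t t', MeasureTheory.Integrable (fun z => F t z * F t' z / Q z) := by
    intro t t'
    simp only [hsplit t t']
    refine pi_prod_integrable (fun ℓ i => fun x =>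
      (if ℓ = t then (1/2) * gaussDensity a (σw^2) x + (1/2) * gaussDensity (-a) (σw^2) x
        else gaussDensity 0 (σw^2) x)
      * (if ℓ = t' then (1/2) * gaussDensity a (σw^2) x + (1/2) * gaussDensity (-a) (σw^2) x
        else gaussDensity 0 (σw^2) x)
      / gaussDensity 0 (σw^2) x) (fun ℓ i => ?_)
    by_cases h1 : ℓ = t <;> by_cases h2 : ℓ = t'
    · simp only [if_pos h1, if_pos h2]; exact q_sq_integrable a hv
    · simp only [if_pos h1, if_neg h2,
        fun x => mul_div_cancel_right₀
          ((1/2) * gaussDensity a (σw^2) x + (1/2) * gaussDensity (-a) (σw^2) x)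
          (gd_pos 0 hv x).ne']
      exact q_integrable a hv
    · simp only [if_neg h1, if_pos h2,
        fun x => mul_div_cancel_left₀
          ((1/2) * gaussDensity a (σw^2) x + (1/2) * gaussDensity (-a) (σw^2) x)
          (gd_pos 0 hv x).ne']
      exact q_integrable a hv
    · simp only [if_neg h1, if_neg h2,
        fun x => mul_div_cancel_right₀ (gaussDensity 0 (σw^2) x) (gd_pos 0 hv x).ne']
      exact gd_integrable 0 hv
  have hFF : ∀ t t', (∫ z, F t z * F t' z / Q z) = if t = t' then c ^ n else 1 := by
    intro t t'
    simp only [hsplit t t']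
    rw [pi_prod_integral (fun ℓ i => fun x =>
      (if ℓ = t then (1/2) * gaussDensity a (σw^2) x + (1/2) * gaussDensity (-a) (σw^2) x
        else gaussDensity 0 (σw^2) x)
      * (if ℓ = t' then (1/2) * gaussDensity a (σw^2) x + (1/2) * gaussDensity (-a) (σw^2) x
        else gaussDensity 0 (σw^2) x)
      / gaussDensity 0 (σw^2) x)]
    have hcoord : ∀ ℓ : Fin L, (∫ x,
        (if ℓ = t then (1/2) * gaussDensity a (σw^2) x + (1/2) * gaussDensity (-a) (σw^2) x
          else gaussDensity 0 (σw^2) x)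
        * (if ℓ = t' then (1/2) * gaussDensity a (σw^2) x + (1/2) * gaussDensity (-a) (σw^2) x
          else gaussDensity 0 (σw^2) x)
        / gaussDensity 0 (σw^2) x)
        = if ℓ = t ∧ ℓ = t' then c else 1 := by
      intro ℓ
      by_cases h1 : ℓ = t <;> by_cases h2 : ℓ = t'
      · simp only [if_pos h1, if_pos h2, if_pos (And.intro h1 h2)]
        exact q_sq_integral a hv
      · simp only [if_pos h1, if_neg h2, if_neg (fun h : _ ∧ _ => h2 h.2),
          fun x => mul_div_cancel_right₀
            ((1/2) * gaussDensity a (σw^2) x + (1/2) * gaussDensity (-a) (σw^2) x)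
            (gd_pos 0 hv x).ne']
        exact q_integral a hv
      · simp only [if_neg h1, if_pos h2, if_neg (fun h : _ ∧ _ => h1 h.1),
          fun x => mul_div_cancel_left₀
            ((1/2) * gaussDensity a (σw^2) x + (1/2) * gaussDensity (-a) (σw^2) x)
            (gd_pos 0 hv x).ne']
        exact q_integral a hv
      · simp only [if_neg h1, if_neg h2, if_neg (fun h : _ ∧ _ => h1 h.1),
          fun x => mul_div_cancel_right₀ (gaussDensity 0 (σw^2) x) (gd_pos 0 hv x).ne']
        exact gd_integral 0 hv
    simp only [hcoord]
    by_cases htt : t = t'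
    · subst htt
      simp only [and_self, if_pos rfl]
      simp [Finset.prod_const, apply_ite (fun x : ℝ => x ^ n), Finset.prod_ite_eq']
    · rw [if_neg htt]
      refine Finset.prod_eq_one fun ℓ _ => Finset.prod_eq_one fun i _ => ?_
      exact if_neg (fun h => htt (h.1.symm.trans h.2))
  have hmain := kl_abstract (α := Fin L → Fin n → ℝ) hL (c ^ n) F Q
    hFpos hQpos hFint hF1 hFFint hFF
  refine le_trans hmain ?_
  -- final arithmetic: c^n / L ≤ exp(n ρ²/(2 σw⁴) − log L)
  have hLpos : (0:ℝ) < L := Nat.cast_pos.mpr hL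
  have h1 : c ≤ Real.exp (ρ ^ 2 / (2 * σw ^ 4)) := by
    rw [hc, hρ]
    refine le_trans (Real.cosh_le_exp_half_sq _) (le_of_eq ?_)
    congr 1
    field_simp
  have h2 : c ^ n ≤ Real.exp ((n : ℝ) * ρ ^ 2 / (2 * σw ^ 4)) := by
    calc c ^ n ≤ Real.exp (ρ ^ 2 / (2 * σw ^ 4)) ^ n :=
          pow_le_pow_left₀ (by rw [hc]; exact (Real.cosh_pos _).le) h1 n
      _ = Real.exp ((n : ℝ) * (ρ ^ 2 / (2 * σw ^ 4))) := by
          rw [← Real.exp_nat_mul]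
      _ = _ := by rw [mul_div_assoc]
  rw [Real.exp_sub, Real.exp_log hLpos]
  gcongr
end

section
/- (Chi-square concentration.) Let Z₁, …, Z_n be independent with Z_i ~ N(0, σ²) for every i, and let 0 < c < nσ². Then P( (1/n) Σ_{i=1}^n (Z_i² − σ²) > c ) ≤ exp( − n c² / (4σ⁴ + 4σ² c) ). -/
open MeasureTheory ProbabilityTheory
open scoped NNReal ENNReal

lemma aux_log_le {x : ℝ} (hx : 1 ≤ x) : Real.log x ≤ (x - x⁻¹) / 2 := by
  rw [← Real.sinh_log (lt_of_lt_of_le one_pos hx)]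
  exact Real.self_le_sinh_iff.2 (Real.log_nonneg hx)

lemma aux_gauss_sq (σ t : ℝ) (hσ : 0 < σ) (ht : 2 * t * σ ^ 2 < 1) :
    Integrable (fun x => Real.exp (t * x ^ 2)) (gaussianReal 0 ⟨σ ^ 2, sq_nonneg σ⟩)
    ∧ ∫ x, Real.exp (t * x ^ 2) ∂(gaussianReal 0 ⟨σ ^ 2, sq_nonneg σ⟩)
        = (Real.sqrt (1 - 2 * t * σ ^ 2))⁻¹ := by
  have hσ2 : (0:ℝ) < σ ^ 2 := by positivity
  set v : ℝ≥0 := ⟨σ ^ 2, sq_nonneg σ⟩ with hv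
  have hv0 : v ≠ 0 := by
    intro h
    have := congrArg NNReal.toReal h
    simp [hv] at this
    exact hσ2.ne' this
  have hvc : (v : ℝ) = σ ^ 2 := rfl
  set b : ℝ := (2 * σ ^ 2)⁻¹ - t with hb
  have hbpos : 0 < b := by
    have h2σ : (0:ℝ) < 2 * σ ^ 2 := by positivity
    have h1 : 2 * σ ^ 2 * (2 * σ ^ 2)⁻¹ = 1 := mul_inv_cancel₀ h2σ.ne'
    rw [hb]
    nlinarith [ht]
  have hfun : ∀ x : ℝ, gaussianPDFReal 0 v x * Real.exp (t * x ^ 2)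
      = (Real.sqrt (2 * Real.pi * σ ^ 2))⁻¹ * Real.exp (-b * x ^ 2) := by
    intro x
    rw [gaussianPDFReal, hvc, mul_assoc, ← Real.exp_add]
    congr 1
    rw [hb, sub_zero, div_eq_mul_inv]
    ring
  have hmeas : Measurable fun x => (gaussianPDFReal 0 v x).toNNReal :=
    (measurable_gaussianPDFReal 0 v).real_toNNReal
  have hdens : gaussianReal 0 v
      = volume.withDensity fun x => ((gaussianPDFReal 0 v x).toNNReal : ℝ≥0∞) := by
    rw [gaussianReal_of_var_ne_zero 0 hv0]
    rfl
  have hsmul : ∀ x : ℝ, (gaussianPDFReal 0 v x).toNNReal • Real.exp (t * x ^ 2)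
      = (Real.sqrt (2 * Real.pi * σ ^ 2))⁻¹ * Real.exp (-b * x ^ 2) := by
    intro x
    have hco : ((gaussianPDFReal 0 v x).toNNReal : ℝ) = gaussianPDFReal 0 v x :=
      Real.coe_toNNReal _ (gaussianPDFReal_nonneg 0 v x)
    rw [NNReal.smul_def, smul_eq_mul, hco]
    exact hfun x
  have hint2 : Integrable (fun x => (Real.sqrt (2 * Real.pi * σ ^ 2))⁻¹
      * Real.exp (-b * x ^ 2)) volume :=
    (integrable_exp_neg_mul_sq hbpos).const_mul _
  constructor
  · rw [hdens, integrable_withDensity_iff_integrable_smul hmeas]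
    exact hint2.congr (Filter.Eventually.of_forall fun x => (hsmul x).symm)
  · rw [hdens, integral_withDensity_eq_integral_smul hmeas]
    rw [integral_congr_ae (Filter.Eventually.of_forall hsmul)]
    rw [integral_const_mul, integral_gaussian]
    rw [← Real.sqrt_inv, ← Real.sqrt_mul (by positivity), ← Real.sqrt_inv]
    congr 1
    have hπ : Real.pi ≠ 0 := Real.pi_ne_zero
    have h2σb : 1 - 2 * t * σ ^ 2 = 2 * σ ^ 2 * b := by rw [hb]; field_simp
    rw [h2σb]
    field_simp

lemma aux_pi_prod {ν : Measure ℝ} [IsProbabilityMeasure ν] (f : ℝ → ℝ)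
    (hf : Integrable f ν) (n : ℕ) :
    Integrable (fun z : Fin n → ℝ => ∏ i, f (z i)) (Measure.pi fun _ => ν) ∧
    ∫ z : Fin n → ℝ, ∏ i, f (z i) ∂(Measure.pi fun _ => ν) = (∫ x, f x ∂ν) ^ n := by
  letI : MeasureSpace ℝ := ⟨ν⟩
  constructor
  · exact MeasureTheory.Integrable.fintype_prod (f := fun _ : Fin n => f) fun i => hf
  · have := MeasureTheory.integral_fintype_prod_eq_pow (ι := Fin n) f (μ := ν)
    simpa using this

/-- **Chi-square concentration.** Let `Z₁, …, Zₙ` be i.i.d. `N(0, σ²)` and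
`0 < c < nσ²`. Then `P((1/n) Σᵢ (Zᵢ² − σ²) > c) ≤ exp(−n c² / (4σ⁴ + 4σ² c))`. -/
theorem stmt9 (σ : ℝ) (hσ : 0 < σ) (n : ℕ) (c : ℝ) (hc : 0 < c) (hcn : c < n * σ ^ 2) :
    ((Measure.pi fun _ : Fin n => gaussianReal 0 ⟨σ ^ 2, sq_nonneg σ⟩)
        {z | c < (1 / (n : ℝ)) * ∑ i, ((z i) ^ 2 - σ ^ 2)}).toReal
      ≤ Real.exp (-(n * c ^ 2) / (4 * σ ^ 4 + 4 * σ ^ 2 * c)) := by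
  have hσ2 : (0:ℝ) < σ ^ 2 := by positivity
  have hn' : (0:ℝ) < n := by nlinarith
  have hsc : (0:ℝ) < σ ^ 2 + c := by linarith
  set ν := gaussianReal 0 (⟨σ ^ 2, sq_nonneg σ⟩ : NNReal) with hν
  set μ := Measure.pi fun _ : Fin n => ν with hμ
  set t : ℝ := c / (2 * σ ^ 2 * (σ ^ 2 + c)) with htdef
  have ht0 : 0 < t := by positivity
  have h2t : 2 * t * σ ^ 2 = c / (σ ^ 2 + c) := by rw [htdef]; field_simp
  have h2t1 : 2 * t * σ ^ 2 < 1 := by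
    rw [h2t, div_lt_one hsc]; linarith
  have h1m : 1 - 2 * t * σ ^ 2 = σ ^ 2 / (σ ^ 2 + c) := by
    rw [h2t]; field_simp; ring
  obtain ⟨hint, hval⟩ := aux_gauss_sq σ t hσ h2t1
  set f : ℝ → ℝ := fun x => Real.exp (t * (x ^ 2 - σ ^ 2)) with hfdef
  have hf_eq : f = fun x => Real.exp (-(t * σ ^ 2)) * Real.exp (t * x ^ 2) := by
    funext x; rw [hfdef, ← Real.exp_add]; ring_nf
  have hf_int : Integrable f ν := by
    rw [hf_eq]; exact hint.const_mul _
  have hf_val : ∫ x, f x ∂ν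
      = Real.exp (-(t * σ ^ 2)) * (Real.sqrt (1 - 2 * t * σ ^ 2))⁻¹ := by
    rw [hf_eq, integral_const_mul, hval]
  set S : (Fin n → ℝ) → ℝ := fun z => ∑ i, ((z i) ^ 2 - σ ^ 2) with hSdef
  have hprod : ∀ z, Real.exp (t * S z) = ∏ i, f (z i) := by
    intro z
    rw [hSdef, Finset.mul_sum, Real.exp_sum]
  haveI : IsProbabilityMeasure ν := ProbabilityTheory.instIsProbabilityMeasureGaussianReal _ _
  obtain ⟨hSint', hSval'⟩ := aux_pi_prod f hf_int n
  have hSint : Integrable (fun z => Real.exp (t * S z)) μ := by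
    rw [hμ]
    exact hSint'.congr (Filter.Eventually.of_forall fun z => (hprod z).symm)
  have hmgf : mgf S μ t = (∫ x, f x ∂ν) ^ n := by
    rw [mgf, hμ, ← hSval']
    exact integral_congr_ae (Filter.Eventually.of_forall hprod)
  have hsub : {z : Fin n → ℝ | c < (1 / (n : ℝ)) * ∑ i, ((z i) ^ 2 - σ ^ 2)}
      ⊆ {z | (n : ℝ) * c ≤ S z} := by
    intro z hz
    simp only [Set.mem_setOf_eq] at hz ⊢
    have h1 : (1 / (n : ℝ)) * (n : ℝ) = 1 := by field_simp
    have h2 : (n : ℝ) * c < (n : ℝ) * ((1 / (n : ℝ)) * ∑ i, ((z i) ^ 2 - σ ^ 2)) :=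
      (mul_lt_mul_iff_right₀ hn').2 hz
    rw [← mul_assoc, mul_one_div_cancel hn'.ne', one_mul] at h2
    exact h2.le
  have hch := measure_ge_le_exp_mul_mgf (X := S) (μ := μ) ((n : ℝ) * c) ht0.le hSint
  have hmono : (μ {z | c < (1 / (n : ℝ)) * ∑ i, ((z i) ^ 2 - σ ^ 2)}).toReal
      ≤ (μ {z | (n : ℝ) * c ≤ S z}).toReal :=
    ENNReal.toReal_mono (measure_ne_top μ _) (measure_mono hsub)
  refine le_trans (le_trans hmono hch) ?_
  -- Now a purely numeric inequality
  rw [hmgf, hf_val, h1m]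
  have hr : (0:ℝ) < σ ^ 2 / (σ ^ 2 + c) := by positivity
  set x : ℝ := (σ ^ 2 + c) / σ ^ 2 with hxdef
  have hx1 : 1 ≤ x := by
    rw [hxdef, le_div_iff₀ hσ2]; linarith
  have hx0 : 0 < x := lt_of_lt_of_le one_pos hx1
  have hsqrt : (Real.sqrt (σ ^ 2 / (σ ^ 2 + c)))⁻¹ = Real.exp (Real.log x / 2) := by
    have hinv : σ ^ 2 / (σ ^ 2 + c) = x⁻¹ := by
      rw [hxdef]; field_simp
    rw [hinv, ← Real.exp_log (x := Real.sqrt x⁻¹) (Real.sqrt_pos.2 (by positivity)),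
      Real.log_sqrt (by positivity), Real.log_inv, ← Real.exp_neg]
    congr 1
    ring
  rw [hsqrt, ← Real.exp_add, ← Real.exp_nat_mul, ← Real.exp_add, Real.exp_le_exp]
  have hL : Real.log x ≤ c / σ ^ 2 - c ^ 2 / (2 * σ ^ 2 * (σ ^ 2 + c)) := by
    have h1 := aux_log_le hx1
    have hxeq : (x - x⁻¹) / 2 = c / σ ^ 2 - c ^ 2 / (2 * σ ^ 2 * (σ ^ 2 + c)) := by
      rw [hxdef]; field_simp; ring
    linarith
  have ht_eq : t * σ ^ 2 + t * c = c / (2 * σ ^ 2) := by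
    rw [htdef]; field_simp
  have key : -(t * c) + (-(t * σ ^ 2) + Real.log x / 2)
      ≤ -(c ^ 2) / (4 * σ ^ 4 + 4 * σ ^ 2 * c) := by
    have hD : c ^ 2 / (4 * σ ^ 4 + 4 * σ ^ 2 * c)
        = (c ^ 2 / (2 * σ ^ 2 * (σ ^ 2 + c))) / 2 := by
      rw [div_div]; congr 1; ring
    have hcd : c / σ ^ 2 = 2 * (c / (2 * σ ^ 2)) := by field_simp
    have : -(c ^ 2) / (4 * σ ^ 4 + 4 * σ ^ 2 * c)
        = -(c ^ 2 / (4 * σ ^ 4 + 4 * σ ^ 2 * c)) := by ring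
    rw [this, hD]
    linarith
  calc -t * ((n : ℝ) * c) + (n : ℝ) * (-(t * σ ^ 2) + Real.log x / 2)
      = (n : ℝ) * (-(t * c) + (-(t * σ ^ 2) + Real.log x / 2)) := by ring
    _ ≤ (n : ℝ) * (-(c ^ 2) / (4 * σ ^ 4 + 4 * σ ^ 2 * c)) :=
        mul_le_mul_of_nonneg_left key hn'.le
    _ = -((n : ℝ) * c ^ 2) / (4 * σ ^ 4 + 4 * σ ^ 2 * c) := by ring
end
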